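/- Let z₀ ∈ ℝ², let ψ₀, ψ₁ ∈ ℂ, and let σ ∈ ℂ with σ ≠ 0. Let Φ : ℝ² → ℝ be differentiable at z₀ with DΦ := ∂Φ/∂x(z₀) + ∂Φ/∂y(z₀) ≠ 0. Let λ : ℝ² → ℝ be differentiable at z₀ and satisfy ψ₀·(∂λ/∂x)(z₀) + ψ₁·(∂λ/∂y)(z₀) = DΦ·σ^{−1}·(1−σ). Let G : ℝ² → ℂ be differentiable at z₀. Then (1−σ)·G(z₀) + σ·(ψ₀·(∂G/∂x)(z₀) + ψ₁·(∂G/∂y)(z₀))/DΦ = e^{−λ(z₀)}·(DΦ)^{−1}·σ·( ψ₀·(∂(e^{λ}G)/∂x)(z₀) + ψ₁·(∂(e^{λ}G)/∂y)(z₀) ), where e^{λ}G denotes the function z ↦ exp(λ(z))·G(z). This is the pointwise, single-idempotent-component form of the exponential factorization Proposition (equation (10)) for the bicomplex proportional fractional weighted Cauchy–Riemann operator. -/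

import Mathlib

/-- Pointwise, single-idempotent-component form of the exponential factorization
(equation (10)): if `ψ₀ ∂λ/∂x + ψ₁ ∂λ/∂y = DΦ σ⁻¹ (1-σ)` at `z₀`, then
`(1-σ) G + σ 𝒟_ψ G / DΦ = e^{-λ} (DΦ)⁻¹ σ 𝒟_ψ (e^{λ} G)` at `z₀`. -/
theorem exp_factorization_pointwise (z₀ : ℝ × ℝ) (ψ₀ ψ₁ σ : ℂ) (hσ : σ ≠ 0)
    (Φ : ℝ × ℝ → ℝ) (hΦ : DifferentiableAt ℝ Φ z₀)
    (hDΦ : fderiv ℝ Φ z₀ (1, 0) + fderiv ℝ Φ z₀ (0, 1) ≠ 0)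
    (lam : ℝ × ℝ → ℝ) (hlam : DifferentiableAt ℝ lam z₀)
    (hlamEq : ψ₀ * (fderiv ℝ lam z₀ (1, 0) : ℂ) + ψ₁ * (fderiv ℝ lam z₀ (0, 1) : ℂ) =
      ((fderiv ℝ Φ z₀ (1, 0) + fderiv ℝ Φ z₀ (0, 1) : ℝ) : ℂ) * σ⁻¹ * (1 - σ))
    (G : ℝ × ℝ → ℂ) (hG : DifferentiableAt ℝ G z₀) :
    (1 - σ) * G z₀ +
        σ * (ψ₀ * fderiv ℝ G z₀ (1, 0) + ψ₁ * fderiv ℝ G z₀ (0, 1)) /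
          ((fderiv ℝ Φ z₀ (1, 0) + fderiv ℝ Φ z₀ (0, 1) : ℝ) : ℂ) =
      Complex.exp (-(lam z₀ : ℂ)) *
        ((fderiv ℝ Φ z₀ (1, 0) + fderiv ℝ Φ z₀ (0, 1) : ℝ) : ℂ)⁻¹ * σ *
        (ψ₀ * fderiv ℝ (fun z => Complex.exp (lam z : ℂ) * G z) z₀ (1, 0) +
          ψ₁ * fderiv ℝ (fun z => Complex.exp (lam z : ℂ) * G z) z₀ (0, 1)) := by
  have hlamC : HasFDerivAt (fun z => ((lam z : ℂ)))
      (Complex.ofRealCLM.comp (fderiv ℝ lam z₀)) z₀ :=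
    Complex.ofRealCLM.hasFDerivAt.comp z₀ hlam.hasFDerivAt
  have hE : HasFDerivAt (fun z => Complex.exp ((lam z : ℂ)))
      (Complex.exp (lam z₀) • (Complex.ofRealCLM.comp (fderiv ℝ lam z₀))) z₀ :=
    (Complex.hasDerivAt_exp _).comp_hasFDerivAt z₀ hlamC
  have hprod : HasFDerivAt (fun z => Complex.exp (lam z : ℂ) * G z) _ z₀ := hE.mul hG.hasFDerivAt
  have hf := hprod.fderiv
  have h1 : fderiv ℝ (fun z => Complex.exp (lam z : ℂ) * G z) z₀ (1, 0) =
      Complex.exp (lam z₀) * (fderiv ℝ lam z₀ (1, 0) : ℂ) * G z₀ +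
      Complex.exp (lam z₀) * fderiv ℝ G z₀ (1, 0) := by
    rw [hf]; simp; ring
  have h2 : fderiv ℝ (fun z => Complex.exp (lam z : ℂ) * G z) z₀ (0, 1) =
      Complex.exp (lam z₀) * (fderiv ℝ lam z₀ (0, 1) : ℂ) * G z₀ +
      Complex.exp (lam z₀) * fderiv ℝ G z₀ (0, 1) := by
    rw [hf]; simp; ring
  rw [h1, h2]
  set D : ℂ := ((fderiv ℝ Φ z₀ (1, 0) + fderiv ℝ Φ z₀ (0, 1) : ℝ) : ℂ) with hD
  have hD0 : D ≠ 0 := by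
    simpa [hD] using (Complex.ofReal_ne_zero.mpr hDΦ)
  have hexp : Complex.exp (-(lam z₀ : ℂ)) * Complex.exp (lam z₀) = 1 := by
    rw [← Complex.exp_add]; simp
  set lx : ℂ := ((fderiv ℝ lam z₀ (1, 0) : ℝ) : ℂ)
  set ly : ℂ := ((fderiv ℝ lam z₀ (0, 1) : ℝ) : ℂ)
  set gx := fderiv ℝ G z₀ (1, 0)
  set gy := fderiv ℝ G z₀ (0, 1)
  calc (1 - σ) * G z₀ + σ * (ψ₀ * gx + ψ₁ * gy) / D
      = D⁻¹ * σ * ((D * σ⁻¹ * (1 - σ)) * G z₀ + (ψ₀ * gx + ψ₁ * gy)) := by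
        field_simp
    _ = D⁻¹ * σ * ((ψ₀ * lx + ψ₁ * ly) * G z₀ + (ψ₀ * gx + ψ₁ * gy)) := by
        rw [hlamEq]
    _ = Complex.exp (-(lam z₀ : ℂ)) * Complex.exp (lam z₀) *
          (D⁻¹ * σ * ((ψ₀ * lx + ψ₁ * ly) * G z₀ + (ψ₀ * gx + ψ₁ * gy))) := by
        rw [hexp, one_mul]
    _ = Complex.exp (-(lam z₀ : ℂ)) * D⁻¹ * σ *
        (ψ₀ * (Complex.exp (lam z₀) * lx * G z₀ + Complex.exp (lam z₀) * gx) +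
         ψ₁ * (Complex.exp (lam z₀) * ly * G z₀ + Complex.exp (lam z₀) * gy)) := by
        ring
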